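/- If G is perfectly divisible, then χ(G) ≤ ω(G)(ω(G)+1)/2, i.e., χ(G) ≤ binomial(ω(G)+1, 2). -/

import Mathlib

open SimpleGraph

/-- `G` contains no induced subgraph isomorphic to `H`. -/
def IsFreeOf {V W : Type*} (G : SimpleGraph V) (H : SimpleGraph W) : Prop :=
  ¬ Nonempty (H ↪g G)

/-- A graph is perfect if every induced subgraph has chromatic number
equal to its clique number. -/
def IsPerfect {V : Type*} (G : SimpleGraph V) : Prop :=
  ∀ s : Set V, (G.induce s).chromaticNumber = ((G.induce s).cliqueNum : ℕ∞)

/-- A graph is perfectly divisible if the vertex set of each of its induced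
subgraphs `H` can be partitioned into `A` and `B` with `H[A]` perfect and
`ω(H[B]) < ω(H)` (the latter required when `ω(H) > 0`). -/
def PerfectlyDivisible {V : Type*} (G : SimpleGraph V) : Prop :=
  ∀ s : Set V, ∃ A B : Set V, A ∪ B = s ∧ Disjoint A B ∧
    IsPerfect (G.induce A) ∧
    (0 < (G.induce s).cliqueNum → (G.induce B).cliqueNum < (G.induce s).cliqueNum)

lemma cliqueNum_le_of_emb {α β : Type*} [Fintype α] [Fintype β]
    {G : SimpleGraph α} {H : SimpleGraph β} (f : G ↪g H) :
    G.cliqueNum ≤ H.cliqueNum := by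
  obtain ⟨s, hs⟩ := G.exists_isNClique_cliqueNum
  have hc : H.IsClique ((s.map f.toEmbedding : Finset β) : Set β) := by
    rintro x hx y hy hne
    simp only [Finset.coe_map, Set.mem_image, Finset.mem_coe] at hx hy
    obtain ⟨a, ha, rfl⟩ := hx
    obtain ⟨b, hb, rfl⟩ := hy
    exact f.map_adj_iff.mpr (hs.isClique ha hb (fun h => hne (by rw [h])))
  calc G.cliqueNum = s.card := hs.card_eq.symm
    _ = (s.map f.toEmbedding).card := (Finset.card_map _).symm
    _ ≤ H.cliqueNum := IsClique.card_le_cliqueNum (tc := hc)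

def inclEmb {V : Type*} (G : SimpleGraph V) {A s : Set V} (h : A ⊆ s) :
    G.induce A ↪g G.induce s where
  toFun := Set.inclusion h
  inj' := Set.inclusion_injective h
  map_rel_iff' := Iff.rfl

lemma cliqueNum_eq_of_iso {α β : Type*} [Fintype α] [Fintype β]
    {G : SimpleGraph α} {H : SimpleGraph β} (f : G ≃g H) :
    G.cliqueNum = H.cliqueNum :=
  le_antisymm (cliqueNum_le_of_emb f.toEmbedding) (cliqueNum_le_of_emb f.symm.toEmbedding)

/-- Combining colorings of two parts. -/
lemma colorable_union {V : Type*} (G : SimpleGraph V) {A B s : Set V} {m k : ℕ}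
    (hU : A ∪ B = s) (hA : (G.induce A).Colorable m) (hB : (G.induce B).Colorable k) :
    (G.induce s).Colorable (m + k) := by
  classical
  obtain ⟨CA⟩ := hA
  obtain ⟨CB⟩ := hB
  have hmem : ∀ v : s, (v : V) ∉ A → (v : V) ∈ B := by
    intro v hv
    have hm : (v : V) ∈ A ∪ B := by rw [hU]; exact v.2
    exact hm.resolve_left hv
  let C : s → Sum (Fin m) (Fin k) := fun v =>
    if h : (v : V) ∈ A then Sum.inl (CA ⟨v, h⟩) else Sum.inr (CB ⟨v, hmem v h⟩)
  have hcol : ∃ D : (G.induce s).Coloring (Sum (Fin m) (Fin k)), True := by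
    refine ⟨Coloring.mk C ?_, trivial⟩
    intro u v huv
    by_cases hu : (u : V) ∈ A <;> by_cases hv : (v : V) ∈ A <;>
      simp only [C, dif_pos, dif_neg, hu, hv]
    · intro h
      exact CA.valid (v := ⟨u, hu⟩) (w := ⟨v, hv⟩) huv (Sum.inl.inj h)
    · exact fun h => by simp at h
    · exact fun h => by simp at h
    · intro h
      exact CB.valid (v := ⟨u, hmem u hu⟩) (w := ⟨v, hmem v hv⟩) huv (Sum.inr.inj h)
  obtain ⟨D, -⟩ := hcol
  have := D.colorable
  simpa using this

lemma isEmpty_of_cliqueNum_zero {α : Type*} [Fintype α] (G : SimpleGraph α)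
    (h : G.cliqueNum = 0) : IsEmpty α := by
  by_contra hne
  rw [not_isEmpty_iff] at hne
  obtain ⟨v⟩ := hne
  have h1 : G.IsClique (({v} : Finset α) : Set α) := by simp
  have := IsClique.card_le_cliqueNum (tc := h1)
  simp [h] at this

lemma key_lemma {V : Type*} [Fintype V] (G : SimpleGraph V) (hpd : PerfectlyDivisible G) :
    ∀ n : ℕ, ∀ s : Set V, (G.induce s).cliqueNum ≤ n →
      (G.induce s).Colorable ((n + 1).choose 2) := by
  classical
  intro n
  induction n with
  | zero =>
    intro s hs
    haveI : IsEmpty s := isEmpty_of_cliqueNum_zero (G.induce s) (Nat.le_zero.mp hs)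
    exact Colorable.of_isEmpty (G := G.induce s) _
  | succ n ih =>
    intro s hs
    obtain ⟨A, B, hU, hD, hperf, hdrop⟩ := hpd s
    by_cases h0 : 0 < (G.induce s).cliqueNum
    · -- bound for B via induction
      have hB : (G.induce B).Colorable ((n + 1).choose 2) := by
        apply ih
        have := hdrop h0
        omega
      -- bound for A via perfection
      have hAsub : A ⊆ s := hU ▸ Set.subset_union_left
      have hAclique : (G.induce A).cliqueNum ≤ n + 1 :=
        le_trans (cliqueNum_le_of_emb (inclEmb G hAsub)) hs
      have hperfA := hperf Set.univ
      have hiso := induceUnivIso (G.induce A)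
      have hcnum : ((G.induce A).induce Set.univ).cliqueNum = (G.induce A).cliqueNum :=
        cliqueNum_eq_of_iso hiso
      rw [hcnum] at hperfA
      have hcolA' : ((G.induce A).induce Set.univ).Colorable ((G.induce A).cliqueNum) := by
        rw [← chromaticNumber_le_iff_colorable, hperfA]
      have hcolA : (G.induce A).Colorable ((G.induce A).cliqueNum) :=
        Colorable.of_hom hiso.symm.toEmbedding.toHom hcolA'
      have hA : (G.induce A).Colorable (n + 1) := hcolA.mono hAclique
      have := colorable_union G hU hA hB
      have heq : (n + 1) + (n + 1).choose 2 = (n + 1 + 1).choose 2 := by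
        rw [Nat.choose_succ_succ (n + 1) 1, Nat.choose_one_right]
      rwa [heq] at this
    · push_neg at h0
      haveI : IsEmpty s := isEmpty_of_cliqueNum_zero (G.induce s) (Nat.le_zero.mp h0)
      exact Colorable.of_isEmpty (G := G.induce s) _

theorem stmt_14 {V : Type*} [Fintype V] (G : SimpleGraph V)
    (hpd : PerfectlyDivisible G) :
    G.chromaticNumber ≤ ((G.cliqueNum + 1).choose 2 : ℕ) := by
  have h1 : (G.induce Set.univ).cliqueNum ≤ G.cliqueNum :=
    le_of_eq (cliqueNum_eq_of_iso (induceUnivIso G))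
  have h2 := key_lemma G hpd G.cliqueNum Set.univ h1
  have h3 : G.Colorable ((G.cliqueNum + 1).choose 2) :=
    Colorable.of_hom (induceUnivIso G).symm.toEmbedding.toHom h2
  exact h3.chromaticNumber_le
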